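/- Let 0 < c < n. Let E (n×c) and E_⊥ (n×(n−c)) be real matrices such that the concatenation [E E_⊥] is an orthogonal matrix. Let A₁ (c×c) and A₂ ((n−c)×(n−c)) be real symmetric matrices and set A := E A₁ Eᵀ + E_⊥ A₂ E_⊥ᵀ. Let H be an n×n real symmetric matrix and suppose A + H = F Λ Fᵀ + F_⊥ Λ_⊥ F_⊥ᵀ, where [F F_⊥] is an orthogonal matrix with F of size n×c, Λ (c×c) and Λ_⊥ ((n−c)×(n−c)) are diagonal, and every diagonal entry of Λ is greater than or equal to every diagonal entry of Λ_⊥ (i.e., the columns of F are eigenvectors of A+H corresponding to its c largest eigenvalues). If λ_min(A₁) − ‖A₂‖₂ − ‖H‖₂ > 0, then ‖(I − F Fᵀ) E‖₂ ≤ ‖H‖₂ / (λ_min(A₁) − ‖A₂‖₂ − ‖H‖₂). -/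

import Mathlib

open Matrix

/-- Spectral norm (largest singular value) of a real matrix. -/
noncomputable def specNorm {m n : Type*} [Fintype m] [Fintype n] [DecidableEq n]
    (A : Matrix m n ℝ) : ℝ :=
  ‖LinearMap.toContinuousLinearMap (Matrix.toEuclideanLin A)‖

/-- Smallest eigenvalue of a (symmetric) real matrix, as the infimum of the
Rayleigh quotient over unit vectors. -/
noncomputable def lambdaMin {m : Type*} [Fintype m] (A : Matrix m m ℝ) : ℝ :=
  ⨅ x : {x : m → ℝ // ∑ i, x i ^ 2 = 1}, ∑ i, x.1 i * A.mulVec x.1 i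

namespace DKaux

variable {m n p q : Type*} [Fintype m] [Fintype n] [Fintype p] [Fintype q]

noncomputable def eucl (x : m → ℝ) : EuclideanSpace ℝ m := (WithLp.equiv 2 _).symm x

noncomputable def clm [DecidableEq n] (A : Matrix m n ℝ) :
    EuclideanSpace ℝ n →L[ℝ] EuclideanSpace ℝ m :=
  LinearMap.toContinuousLinearMap (Matrix.toEuclideanLin A)

lemma specNorm_eq [DecidableEq n] (A : Matrix m n ℝ) : specNorm A = ‖clm A‖ := rfl

@[simp] lemma clm_apply [DecidableEq n] (A : Matrix m n ℝ) (x : n → ℝ) :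
    clm A (eucl x) = eucl (A *ᵥ x) := rfl

@[simp] lemma inner_eucl (x y : m → ℝ) : (inner ℝ (eucl x) (eucl y) : ℝ) = x ⬝ᵥ y := by
  simp [eucl, PiLp.inner_apply, RCLike.inner_apply, dotProduct, mul_comm]

lemma norm_eucl_sq (x : m → ℝ) : ‖eucl x‖ ^ 2 = x ⬝ᵥ x := by
  rw [← real_inner_self_eq_norm_sq, inner_eucl]

lemma specNorm_nonneg [DecidableEq n] (A : Matrix m n ℝ) : 0 ≤ specNorm A := norm_nonneg _

lemma norm_mulVec_le [DecidableEq n] (A : Matrix m n ℝ) (x : n → ℝ) :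
    ‖eucl (A *ᵥ x)‖ ≤ specNorm A * ‖eucl x‖ := by
  rw [← clm_apply]; exact (clm A).le_opNorm _

lemma specNorm_le_bound [DecidableEq n] (A : Matrix m n ℝ) {C : ℝ} (hC : 0 ≤ C)
    (h : ∀ x, ‖eucl (A *ᵥ x)‖ ≤ C * ‖eucl x‖) : specNorm A ≤ C := by
  refine ContinuousLinearMap.opNorm_le_bound _ hC fun x => ?_
  exact h ((WithLp.equiv 2 _) x)

lemma dot_mulVec_swap (A : Matrix m n ℝ) (x : m → ℝ) (y : n → ℝ) :
    (A *ᵥ y) ⬝ᵥ x = y ⬝ᵥ (Aᵀ *ᵥ x) := by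
  rw [dotProduct_comm, dotProduct_mulVec, ← mulVec_transpose, dotProduct_comm]

lemma clm_transpose_eq_adjoint [DecidableEq m] [DecidableEq n] (A : Matrix m n ℝ) :
    clm Aᵀ = ContinuousLinearMap.adjoint (clm A) := by
  rw [ContinuousLinearMap.eq_adjoint_iff]
  intro x y
  have hx : x = eucl ((WithLp.equiv 2 _) x) := rfl
  have hy : y = eucl ((WithLp.equiv 2 _) y) := rfl
  rw [hx, hy, clm_apply, clm_apply, inner_eucl, inner_eucl, dot_mulVec_swap, transpose_transpose]

lemma specNorm_transpose [DecidableEq m] [DecidableEq n] (A : Matrix m n ℝ) :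
    specNorm Aᵀ = specNorm A := by
  rw [specNorm_eq, specNorm_eq, clm_transpose_eq_adjoint]
  exact LinearIsometryEquiv.norm_map ContinuousLinearMap.adjoint (clm A)

lemma specNorm_neg [DecidableEq n] (A : Matrix m n ℝ) : specNorm (-A) = specNorm A := by
  rw [specNorm_eq, specNorm_eq]
  have : clm (-A) = -(clm A) := by
    refine ContinuousLinearMap.ext fun x => ?_
    have hx : x = eucl ((WithLp.equiv 2 _) x) := rfl
    rw [hx]
    show eucl ((-A) *ᵥ _) = -(clm A (eucl _))
    rw [neg_mulVec]
    rfl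
  rw [this, norm_neg]

lemma specNorm_mul_le [DecidableEq n] [DecidableEq p] (A : Matrix m n ℝ) (B : Matrix n p ℝ) :
    specNorm (A * B) ≤ specNorm A * specNorm B := by
  refine specNorm_le_bound _ (mul_nonneg (specNorm_nonneg _) (specNorm_nonneg _)) fun x => ?_
  rw [← mulVec_mulVec]
  calc ‖eucl (A *ᵥ B *ᵥ x)‖ ≤ specNorm A * ‖eucl (B *ᵥ x)‖ := norm_mulVec_le _ _
    _ ≤ specNorm A * (specNorm B * ‖eucl x‖) :=
        mul_le_mul_of_nonneg_left (norm_mulVec_le _ _) (specNorm_nonneg _)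
    _ = specNorm A * specNorm B * ‖eucl x‖ := by ring

lemma norm_mulVec_eq_of_orthonormal [DecidableEq n] {U : Matrix m n ℝ} (hU : Uᵀ * U = 1)
    (x : n → ℝ) : ‖eucl (U *ᵥ x)‖ = ‖eucl x‖ := by
  have h2 : ‖eucl (U *ᵥ x)‖ ^ 2 = ‖eucl x‖ ^ 2 := by
    rw [norm_eucl_sq, norm_eucl_sq, dot_mulVec_swap, mulVec_mulVec, hU, one_mulVec]
  nlinarith [norm_nonneg (eucl (U *ᵥ x)), norm_nonneg (eucl x)]

lemma specNorm_unit_mul [DecidableEq n] [DecidableEq p] {U : Matrix m n ℝ} (hU : Uᵀ * U = 1)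
    (B : Matrix n p ℝ) : specNorm (U * B) = specNorm B := by
  refine le_antisymm ?_ ?_
  · refine specNorm_le_bound _ (specNorm_nonneg _) fun x => ?_
    rw [← mulVec_mulVec, norm_mulVec_eq_of_orthonormal hU]
    exact norm_mulVec_le _ _
  · refine specNorm_le_bound _ (specNorm_nonneg _) fun x => ?_
    rw [← norm_mulVec_eq_of_orthonormal hU (B *ᵥ x), mulVec_mulVec]
    exact norm_mulVec_le _ _

lemma specNorm_le_one_of_orthonormal [DecidableEq n] {U : Matrix m n ℝ} (hU : Uᵀ * U = 1) :
    specNorm U ≤ 1 := by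
  refine specNorm_le_bound _ zero_le_one fun x => ?_
  rw [norm_mulVec_eq_of_orthonormal hU, one_mul]

lemma abs_dot_mulVec_le [DecidableEq n] (A : Matrix m n ℝ) (x : m → ℝ) (y : n → ℝ) :
    |x ⬝ᵥ (A *ᵥ y)| ≤ specNorm A * ‖eucl x‖ * ‖eucl y‖ := by
  have h := abs_real_inner_le_norm (eucl x) (eucl (A *ᵥ y))
  rw [inner_eucl] at h
  calc |x ⬝ᵥ (A *ᵥ y)| ≤ ‖eucl x‖ * ‖eucl (A *ᵥ y)‖ := h
    _ ≤ ‖eucl x‖ * (specNorm A * ‖eucl y‖) :=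
        mul_le_mul_of_nonneg_left (norm_mulVec_le _ _) (norm_nonneg _)
    _ = specNorm A * ‖eucl x‖ * ‖eucl y‖ := by ring

lemma quad_le_specNorm [DecidableEq n] (A : Matrix n n ℝ) (b : n → ℝ) :
    b ⬝ᵥ (A *ᵥ b) ≤ specNorm A * (b ⬝ᵥ b) := by
  have h := abs_dot_mulVec_le A b b
  have h2 : ‖eucl b‖ * ‖eucl b‖ = b ⬝ᵥ b := by rw [← norm_eucl_sq]; ring
  calc b ⬝ᵥ (A *ᵥ b) ≤ |b ⬝ᵥ (A *ᵥ b)| := le_abs_self _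
    _ ≤ specNorm A * ‖eucl b‖ * ‖eucl b‖ := h
    _ = specNorm A * (b ⬝ᵥ b) := by rw [mul_assoc, h2]

lemma norm_eucl_eq_one {x : m → ℝ} (h : x ⬝ᵥ x = 1) : ‖eucl x‖ = 1 := by
  have := norm_eucl_sq x
  rw [h] at this
  nlinarith [norm_nonneg (eucl x)]

/-- Existence of a top singular vector. -/
lemma exists_top_singular_vector [DecidableEq m] [DecidableEq p] [Nonempty p]
    (S : Matrix m p ℝ) :
    ∃ v : p → ℝ, v ⬝ᵥ v = 1 ∧ ‖eucl (S *ᵥ v)‖ = specNorm S ∧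
      Sᵀ *ᵥ (S *ᵥ v) = (specNorm S ^ 2) • v := by
  have hsph : (Metric.sphere (0 : EuclideanSpace ℝ p) 1).Nonempty :=
    NormedSpace.sphere_nonempty.2 zero_le_one
  have hcpt : IsCompact (Metric.sphere (0 : EuclideanSpace ℝ p) 1) :=
    isCompact_sphere 0 1
  have hcont : Continuous fun x : EuclideanSpace ℝ p => ‖clm S x‖ :=
    (clm S).continuous.norm
  obtain ⟨x₀, hx₀mem, hmax⟩ := hcpt.exists_isMaxOn hsph hcont.continuousOn
  have hx₀norm : ‖x₀‖ = 1 := by simpa using hx₀mem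
  have hx₀ne : x₀ ≠ 0 := by intro h; rw [h] at hx₀norm; simp at hx₀norm
  have hattain : ‖clm S x₀‖ = specNorm S := by
    refine le_antisymm ?_ ?_
    · calc ‖clm S x₀‖ ≤ ‖clm S‖ * ‖x₀‖ := (clm S).le_opNorm _
        _ = specNorm S := by rw [hx₀norm, mul_one, specNorm_eq]
    · rw [specNorm_eq]
      refine ContinuousLinearMap.opNorm_le_bound _ (norm_nonneg _) fun x => ?_
      rcases eq_or_ne x 0 with rfl | hx
      · simp
      · have hxs : (‖x‖⁻¹ • x) ∈ Metric.sphere (0 : EuclideanSpace ℝ p) 1 := by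
          simp [norm_smul, abs_of_nonneg (inv_nonneg.2 (norm_nonneg x)),
            inv_mul_cancel₀ (norm_ne_zero_iff.2 hx)]
        have := hmax hxs
        simp only [Set.mem_setOf_eq, _root_.map_smul, norm_smul, norm_inv, norm_norm] at this
        have hxpos : 0 < ‖x‖ := norm_pos_iff.2 hx
        calc ‖clm S x‖ = ‖x‖ * (‖x‖⁻¹ * ‖clm S x‖) := by field_simp
          _ ≤ ‖x‖ * ‖clm S x₀‖ := by
              refine mul_le_mul_of_nonneg_left ?_ (le_of_lt hxpos)
              simpa using this
          _ = ‖clm S x₀‖ * ‖x‖ := mul_comm _ _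
  set T : EuclideanSpace ℝ p →L[ℝ] EuclideanSpace ℝ p :=
    ContinuousLinearMap.adjoint (clm S) ∘L clm S with hT
  have hTsa : _root_.IsSelfAdjoint T := by
    rw [_root_.IsSelfAdjoint, ContinuousLinearMap.star_eq_adjoint, hT,
      ContinuousLinearMap.adjoint_comp, ContinuousLinearMap.adjoint_adjoint]
  have hre : ∀ x : EuclideanSpace ℝ p, T.reApplyInnerSelf x = ‖clm S x‖ ^ 2 := by
    intro x
    have h1 : (inner ℝ (T x) x : ℝ) = inner ℝ (clm S x) (clm S x) := by
      rw [hT]; exact ContinuousLinearMap.adjoint_inner_left (clm S) x (clm S x)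
    have h2 : T.reApplyInnerSelf x = (inner ℝ (T x) x : ℝ) := rfl
    rw [h2, h1, real_inner_self_eq_norm_sq]
  have hextr : IsMaxOn T.reApplyInnerSelf (Metric.sphere (0 : EuclideanSpace ℝ p) ‖x₀‖) x₀ := by
    rw [hx₀norm]
    intro x hx
    simp only [Set.mem_setOf_eq, hre]
    have h1 : ‖clm S x‖ ≤ ‖clm S x₀‖ := hmax hx
    nlinarith [norm_nonneg (clm S x), norm_nonneg (clm S x₀)]
  have heig := hTsa.eq_smul_self_of_isLocalExtrOn (Or.inr hextr.localize)
  have hray : T.rayleighQuotient x₀ = specNorm S ^ 2 := by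
    rw [ContinuousLinearMap.rayleighQuotient, hre, hx₀norm, hattain]
    simp
  rw [hray] at heig
  refine ⟨(WithLp.equiv 2 _) x₀, ?_, ?_, ?_⟩
  · have : x₀ = eucl ((WithLp.equiv 2 _) x₀) := rfl
    rw [← norm_eucl_sq, ← this, hx₀norm]; norm_num
  · have : x₀ = eucl ((WithLp.equiv 2 _) x₀) := rfl
    rw [← clm_apply, ← this, hattain]
  · have hx : x₀ = eucl ((WithLp.equiv 2 _) x₀) := rfl
    have : T x₀ = eucl (Sᵀ *ᵥ (S *ᵥ ((WithLp.equiv 2 _) x₀))) := by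
      rw [hT, ContinuousLinearMap.comp_apply, ← clm_transpose_eq_adjoint]
      rfl
    rw [this, hx] at heig
    have := congrArg (WithLp.equiv 2 (p → ℝ)) heig
    simpa [eucl] using this

/-- Sylvester equation bound. -/
lemma sylvester_bound [DecidableEq p] [DecidableEq q] [Nonempty p]
    (S R : Matrix q p ℝ) (A1 : Matrix p p ℝ) (D : q → ℝ) (α β : ℝ)
    (hA1lb : ∀ v : p → ℝ, v ⬝ᵥ v = 1 → α ≤ v ⬝ᵥ (A1 *ᵥ v))
    (hD : ∀ j, D j ≤ β)
    (hR : S * A1 - (Matrix.diagonal D) * S = R) :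
    (α - β) * specNorm S ≤ specNorm R := by
  rcases eq_or_lt_of_le (specNorm_nonneg S) with hS0 | hSpos
  · rw [← hS0, mul_zero]; exact specNorm_nonneg R
  set σ := specNorm S with hσ
  obtain ⟨v, hv1, hv2, hv3⟩ := exists_top_singular_vector S
  set u : q → ℝ := σ⁻¹ • (S *ᵥ v) with hu
  have hSv : (S *ᵥ v) ⬝ᵥ (S *ᵥ v) = σ ^ 2 := by
    rw [← norm_eucl_sq, hv2]
  have huu : u ⬝ᵥ u = 1 := by
    rw [hu, smul_dotProduct, dotProduct_smul, hSv, smul_eq_mul, smul_eq_mul]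
    field_simp
  have hStu : Sᵀ *ᵥ u = σ • v := by
    rw [hu, mulVec_smul, hv3]
    ext i
    simp [smul_eq_mul]
    field_simp
    ring
  have hterm1 : u ⬝ᵥ ((S * A1) *ᵥ v) ≥ σ * α := by
    rw [← mulVec_mulVec, dotProduct_comm, dot_mulVec_swap, hStu, dotProduct_smul]
    have := hA1lb v hv1
    rw [smul_eq_mul]
    calc σ * α ≤ σ * (v ⬝ᵥ (A1 *ᵥ v)) :=
          mul_le_mul_of_nonneg_left this (le_of_lt hSpos)
      _ = σ * ((A1 *ᵥ v) ⬝ᵥ v) := by rw [dotProduct_comm]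
  have hSveq : S *ᵥ v = σ • u := by
    rw [hu, smul_smul, mul_inv_cancel₀ (ne_of_gt hSpos), one_smul]
  have hterm2 : u ⬝ᵥ ((Matrix.diagonal D * S) *ᵥ v) ≤ σ * β := by
    rw [← mulVec_mulVec, hSveq, mulVec_smul, dotProduct_smul, smul_eq_mul]
    have hdot : u ⬝ᵥ (Matrix.diagonal D *ᵥ u) ≤ β := by
      have hle : ∀ i, u i * (Matrix.diagonal D *ᵥ u) i ≤ β * (u i * u i) := by
        intro i
        rw [mulVec_diagonal]
        have h2 : u i * u i ≥ 0 := mul_self_nonneg _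
        calc u i * (D i * u i) = D i * (u i * u i) := by ring
          _ ≤ β * (u i * u i) := mul_le_mul_of_nonneg_right (hD i) h2
      calc u ⬝ᵥ (Matrix.diagonal D *ᵥ u) ≤ ∑ i, β * (u i * u i) :=
            Finset.sum_le_sum fun i _ => hle i
        _ = β * (u ⬝ᵥ u) := by rw [dotProduct, Finset.mul_sum]
        _ = β := by rw [huu, mul_one]
    exact mul_le_mul_of_nonneg_left hdot (le_of_lt hSpos)
  have hkey : σ * (α - β) ≤ u ⬝ᵥ (R *ᵥ v) := by
    have heq : u ⬝ᵥ (R *ᵥ v)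
        = u ⬝ᵥ ((S * A1) *ᵥ v) - u ⬝ᵥ ((Matrix.diagonal D * S) *ᵥ v) := by
      rw [← hR, sub_mulVec, dotProduct_sub]
    rw [heq]
    have := hterm1
    nlinarith
  have hub : u ⬝ᵥ (R *ᵥ v) ≤ specNorm R := by
    have h := abs_dot_mulVec_le R u v
    rw [norm_eucl_eq_one huu, norm_eucl_eq_one hv1] at h
    calc u ⬝ᵥ (R *ᵥ v) ≤ |u ⬝ᵥ (R *ᵥ v)| := le_abs_self _
      _ ≤ specNorm R * 1 * 1 := h
      _ = specNorm R := by ring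
  calc (α - β) * σ = σ * (α - β) := mul_comm _ _
    _ ≤ u ⬝ᵥ (R *ᵥ v) := hkey
    _ ≤ specNorm R := hub

lemma dot_self_pos {x : m → ℝ} (hx : x ≠ 0) : 0 < x ⬝ᵥ x := by
  obtain ⟨i, hi⟩ : ∃ i, x i ≠ 0 := Function.ne_iff.1 hx
  have hle : ∀ j ∈ Finset.univ, (0:ℝ) ≤ x j * x j := fun j _ => mul_self_nonneg _
  exact Finset.sum_pos' hle ⟨i, Finset.mem_univ i, mul_self_pos.2 hi⟩

lemma mulVec_injective_of_orthonormal [DecidableEq n] {U : Matrix m n ℝ} (hU : Uᵀ * U = 1) :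
    Function.Injective U.mulVecLin := by
  rw [← LinearMap.ker_eq_bot, LinearMap.ker_eq_bot']
  intro a ha
  have h : Uᵀ *ᵥ (U *ᵥ a) = a := by
    rw [mulVec_mulVec, hU, one_mulVec]
  rw [show U.mulVecLin a = U *ᵥ a from rfl] at ha
  rw [ha, mulVec_zero] at h
  exact h.symm

/-- Generic subspace-intersection eigenvalue comparison. -/
lemma subspace_compare {N J K : Type*} [Fintype N] [Fintype J] [Fintype K]
    [DecidableEq N] [DecidableEq J] [DecidableEq K]
    (M : Matrix N N ℝ) (Ep : Matrix N K ℝ) (hEp : Epᵀ * Ep = 1)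
    (G : Matrix N J ℝ) (hG : Gᵀ * G = 1)
    (μ β : ℝ)
    (hcard : Fintype.card N < Fintype.card J + Fintype.card K)
    (hμ : ∀ a : J → ℝ, μ * (a ⬝ᵥ a) ≤ (G *ᵥ a) ⬝ᵥ (M *ᵥ (G *ᵥ a)))
    (hβ : ∀ b : K → ℝ, (Ep *ᵥ b) ⬝ᵥ (M *ᵥ (Ep *ᵥ b)) ≤ β * (b ⬝ᵥ b)) :
    μ ≤ β := by
  set V := LinearMap.range G.mulVecLin
  set W := LinearMap.range Ep.mulVecLin
  have hV : Module.finrank ℝ V = Fintype.card J := by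
    rw [LinearMap.finrank_range_of_inj (mulVec_injective_of_orthonormal hG),
      Module.finrank_fintype_fun_eq_card]
  have hW : Module.finrank ℝ W = Fintype.card K := by
    rw [LinearMap.finrank_range_of_inj (mulVec_injective_of_orthonormal hEp),
      Module.finrank_fintype_fun_eq_card]
  have hsup : Module.finrank ℝ ↥(V ⊔ W) ≤ Fintype.card N := by
    calc Module.finrank ℝ ↥(V ⊔ W) ≤ Module.finrank ℝ (N → ℝ) := Submodule.finrank_le _
      _ = Fintype.card N := Module.finrank_fintype_fun_eq_card ℝ
  have heq := Submodule.finrank_sup_add_finrank_inf_eq V W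
  have hinf : 0 < Module.finrank ℝ ↥(V ⊓ W) := by omega
  have : Nontrivial ↥(V ⊓ W) := Module.nontrivial_of_finrank_pos hinf
  obtain ⟨⟨x, hxV, hxW⟩, hxne⟩ := exists_ne (0 : ↥(V ⊓ W))
  have hx0 : x ≠ 0 := fun h => hxne (Subtype.ext h)
  obtain ⟨a, ha⟩ := hxV
  obtain ⟨b, hb⟩ := hxW
  have ha' : G *ᵥ a = x := ha
  have hb' : Ep *ᵥ b = x := hb
  have haa : a ⬝ᵥ a = x ⬝ᵥ x := by
    rw [← ha', dotProduct_mulVec, ← mulVec_transpose, mulVec_mulVec, hG, one_mulVec]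
  have hbb : b ⬝ᵥ b = x ⬝ᵥ x := by
    rw [← hb', dotProduct_mulVec, ← mulVec_transpose, mulVec_mulVec, hEp, one_mulVec]
  have h1 := hμ a
  have h2 := hβ b
  rw [ha', haa] at h1
  rw [hb', hbb] at h2
  have hpos := dot_self_pos hx0
  have h3 := le_trans h1 h2
  exact le_of_mul_le_mul_right (by linarith [h3]) hpos

lemma diag_quad_ge [DecidableEq m] (D : m → ℝ) (μ : ℝ) (h : ∀ i, μ ≤ D i) (a : m → ℝ) :
    μ * (a ⬝ᵥ a) ≤ a ⬝ᵥ (Matrix.diagonal D *ᵥ a) := by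
  have hle : ∀ i, μ * (a i * a i) ≤ a i * (Matrix.diagonal D *ᵥ a) i := by
    intro i
    rw [mulVec_diagonal]
    have h2 : a i * a i ≥ 0 := mul_self_nonneg _
    calc μ * (a i * a i) ≤ D i * (a i * a i) := mul_le_mul_of_nonneg_right (h i) h2
      _ = a i * (D i * a i) := by ring
  calc μ * (a ⬝ᵥ a) = ∑ i, μ * (a i * a i) := by rw [dotProduct, Finset.mul_sum]
    _ ≤ ∑ i, a i * (Matrix.diagonal D *ᵥ a) i := Finset.sum_le_sum fun i _ => hle i
    _ = a ⬝ᵥ (Matrix.diagonal D *ᵥ a) := rfl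

lemma orthonormal_blocks {N K1 K2 : Type*} [Fintype N] [Fintype K1] [Fintype K2]
    [DecidableEq K1] [DecidableEq K2]
    {U : Matrix N K1 ℝ} {V : Matrix N K2 ℝ}
    (h : (Matrix.fromCols U V)ᵀ * Matrix.fromCols U V = 1) :
    Uᵀ * U = 1 ∧ Uᵀ * V = 0 ∧ Vᵀ * U = 0 ∧ Vᵀ * V = 1 := by
  rw [transpose_fromCols, fromRows_mul_fromCols, ← fromBlocks_one, fromBlocks_inj] at h
  exact ⟨h.1, h.2.1, h.2.2.1, h.2.2.2⟩

lemma lambdaMin_le [DecidableEq m] (A : Matrix m m ℝ) {v : m → ℝ} (hv : v ⬝ᵥ v = 1) :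
    lambdaMin A ≤ v ⬝ᵥ (A *ᵥ v) := by
  have hbdd : BddBelow (Set.range fun x : {x : m → ℝ // ∑ i, x i ^ 2 = 1} =>
      ∑ i, x.1 i * A.mulVec x.1 i) := by
    refine ⟨-specNorm A, ?_⟩
    rintro y ⟨⟨x, hx⟩, rfl⟩
    have hx' : x ⬝ᵥ x = 1 := by
      rw [dotProduct]; rw [← hx]; exact Finset.sum_congr rfl fun i _ => by ring
    have h := abs_dot_mulVec_le A x x
    rw [norm_eucl_eq_one hx'] at h
    show -specNorm A ≤ ∑ i, x i * (A *ᵥ x) i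
    have hxa : x ⬝ᵥ (A *ᵥ x) = ∑ i, x i * (A *ᵥ x) i := rfl
    rw [← hxa]
    have habs := abs_le.1 (by simpa using h)
    linarith [habs.1]
  have hv' : ∑ i, v i ^ 2 = 1 := by
    rw [← hv, dotProduct]; exact Finset.sum_congr rfl fun i _ => by ring
  have := ciInf_le hbdd (⟨v, hv'⟩ : {x : m → ℝ // ∑ i, x i ^ 2 = 1})
  simpa [lambdaMin, dotProduct] using this

end DKaux

open DKaux in
/-- Davis–Kahan sin θ theorem combined with Weyl's inequality: the top-`c`
eigenvectors `F` of the perturbed matrix `A + H` satisfy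
`‖(I − FFᵀ)E‖₂ ≤ ‖H‖₂ / (λ_min(A₁) − ‖A₂‖₂ − ‖H‖₂)`. -/
theorem stmt11 {n c : ℕ} (hc : 0 < c) (hcn : c < n)
    (E : Matrix (Fin n) (Fin c) ℝ) (Eperp : Matrix (Fin n) (Fin (n - c)) ℝ)
    (hE1 : (Matrix.fromCols E Eperp)ᵀ * Matrix.fromCols E Eperp = 1)
    (hE2 : Matrix.fromCols E Eperp * (Matrix.fromCols E Eperp)ᵀ = 1)
    (A1 : Matrix (Fin c) (Fin c) ℝ) (A2 : Matrix (Fin (n - c)) (Fin (n - c)) ℝ)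
    (hA1 : A1ᵀ = A1) (hA2 : A2ᵀ = A2)
    (A H : Matrix (Fin n) (Fin n) ℝ)
    (hA : A = E * A1 * Eᵀ + Eperp * A2 * Eperpᵀ)
    (hH : Hᵀ = H)
    (F : Matrix (Fin n) (Fin c) ℝ) (Fperp : Matrix (Fin n) (Fin (n - c)) ℝ)
    (hF1 : (Matrix.fromCols F Fperp)ᵀ * Matrix.fromCols F Fperp = 1)
    (hF2 : Matrix.fromCols F Fperp * (Matrix.fromCols F Fperp)ᵀ = 1)
    (d : Fin c → ℝ) (dperp : Fin (n - c) → ℝ)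
    (hord : ∀ i j, dperp j ≤ d i)
    (hdecomp : A + H =
      F * Matrix.diagonal d * Fᵀ + Fperp * Matrix.diagonal dperp * Fperpᵀ)
    (hpos : 0 < lambdaMin A1 - specNorm A2 - specNorm H) :
    specNorm ((1 - F * Fᵀ) * E) ≤
      specNorm H / (lambdaMin A1 - specNorm A2 - specNorm H) := by
  classical
  haveI : Nonempty (Fin c) := ⟨⟨0, hc⟩⟩
  obtain ⟨hEE, hEEp, hEpE, hEpEp⟩ := orthonormal_blocks hE1
  obtain ⟨hFF, hFFp, hFpF, hFpFp⟩ := orthonormal_blocks hF1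
  set S : Matrix (Fin (n - c)) (Fin c) ℝ := Fperpᵀ * E with hSdef
  -- step 1: rewrite the goal matrix
  have honeminus : (1 : Matrix (Fin n) (Fin n) ℝ) - F * Fᵀ = Fperp * Fperpᵀ := by
    have h2 : F * Fᵀ + Fperp * Fperpᵀ = 1 := by
      rw [← hF2, transpose_fromCols, fromCols_mul_fromRows]
    linear_combination (norm := abel) - h2
  have hgoal_eq : specNorm ((1 - F * Fᵀ) * E) = specNorm S := by
    rw [honeminus, Matrix.mul_assoc, ← hSdef, specNorm_unit_mul hFpFp]
  -- step 2: the Sylvester equation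
  have hAE : A * E = E * A1 := by
    rw [hA]
    calc (E * A1 * Eᵀ + Eperp * A2 * Eperpᵀ) * E
        = E * A1 * (Eᵀ * E) + Eperp * A2 * (Eperpᵀ * E) := by
          simp only [Matrix.add_mul, Matrix.mul_assoc]
      _ = E * A1 := by rw [hEE, hEpE, Matrix.mul_one, Matrix.mul_zero, add_zero]
  have hFpAH : Fperpᵀ * (A + H) = Matrix.diagonal dperp * Fperpᵀ := by
    rw [hdecomp, Matrix.mul_add]
    have h1 : Fperpᵀ * (F * Matrix.diagonal d * Fᵀ) = 0 := by
      rw [show F * Matrix.diagonal d * Fᵀ = F * (Matrix.diagonal d * Fᵀ) from Matrix.mul_assoc _ _ _,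
        ← Matrix.mul_assoc, hFpF, Matrix.zero_mul]
    have h2 : Fperpᵀ * (Fperp * Matrix.diagonal dperp * Fperpᵀ)
        = Matrix.diagonal dperp * Fperpᵀ := by
      rw [show Fperp * Matrix.diagonal dperp * Fperpᵀ
            = Fperp * (Matrix.diagonal dperp * Fperpᵀ) from Matrix.mul_assoc _ _ _,
        ← Matrix.mul_assoc, hFpFp, Matrix.one_mul]
    rw [h1, h2, zero_add]
  have hsyl : S * A1 - Matrix.diagonal dperp * S = -(Fperpᵀ * H * E) := by
    have h1 : Matrix.diagonal dperp * S = S * A1 + Fperpᵀ * H * E := by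
      calc Matrix.diagonal dperp * S = Matrix.diagonal dperp * Fperpᵀ * E := by
            rw [hSdef, Matrix.mul_assoc]
        _ = Fperpᵀ * (A + H) * E := by rw [hFpAH]
        _ = Fperpᵀ * (A * E) + Fperpᵀ * H * E := by
            simp only [Matrix.add_mul, Matrix.mul_add, Matrix.mul_assoc]
        _ = Fperpᵀ * (E * A1) + Fperpᵀ * H * E := by rw [hAE]
        _ = S * A1 + Fperpᵀ * H * E := by
            rw [hSdef]; simp only [Matrix.mul_assoc]
    rw [h1]
    abel
  -- step 3: bound on the right-hand side
  have hRle : specNorm (-(Fperpᵀ * H * E)) ≤ specNorm H := by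
    rw [specNorm_neg]
    have hFpT : specNorm Fperpᵀ ≤ 1 := by
      rw [specNorm_transpose]
      exact specNorm_le_one_of_orthonormal hFpFp
    have hE1' : specNorm E ≤ 1 := specNorm_le_one_of_orthonormal hEE
    calc specNorm (Fperpᵀ * H * E) ≤ specNorm (Fperpᵀ * H) * specNorm E := specNorm_mul_le _ _
      _ ≤ specNorm (Fperpᵀ * H) * 1 :=
          mul_le_mul_of_nonneg_left hE1' (specNorm_nonneg _)
      _ = specNorm (Fperpᵀ * H) := mul_one _
      _ ≤ specNorm Fperpᵀ * specNorm H := specNorm_mul_le _ _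
      _ ≤ 1 * specNorm H := mul_le_mul_of_nonneg_right hFpT (specNorm_nonneg _)
      _ = specNorm H := one_mul _
  -- step 4: Weyl-type bound on the dperp
  set β : ℝ := specNorm A2 + specNorm H with hβdef
  have hAEp : A * Eperp = Eperp * A2 := by
    rw [hA]
    calc (E * A1 * Eᵀ + Eperp * A2 * Eperpᵀ) * Eperp
        = E * A1 * (Eᵀ * Eperp) + Eperp * A2 * (Eperpᵀ * Eperp) := by
          simp only [Matrix.add_mul, Matrix.mul_assoc]
      _ = Eperp * A2 := by rw [hEEp, hEpEp, Matrix.mul_one, Matrix.mul_zero, zero_add]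
  have hAHF : (A + H) * F = F * Matrix.diagonal d := by
    rw [hdecomp]
    calc (F * Matrix.diagonal d * Fᵀ + Fperp * Matrix.diagonal dperp * Fperpᵀ) * F
        = F * Matrix.diagonal d * (Fᵀ * F)
            + Fperp * Matrix.diagonal dperp * (Fperpᵀ * F) := by
          simp only [Matrix.add_mul, Matrix.mul_assoc]
      _ = F * Matrix.diagonal d := by
          rw [hFF, hFpF, Matrix.mul_one, Matrix.mul_zero, add_zero]
  have hAHFp : (A + H) * Fperp = Fperp * Matrix.diagonal dperp := by
    rw [hdecomp]
    calc (F * Matrix.diagonal d * Fᵀ + Fperp * Matrix.diagonal dperp * Fperpᵀ) * Fperp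
        = F * Matrix.diagonal d * (Fᵀ * Fperp)
            + Fperp * Matrix.diagonal dperp * (Fperpᵀ * Fperp) := by
          simp only [Matrix.add_mul, Matrix.mul_assoc]
      _ = Fperp * Matrix.diagonal dperp := by
          rw [hFFp, hFpFp, Matrix.mul_one, Matrix.mul_zero, zero_add]
  have hweyl : ∀ j, dperp j ≤ β := by
    intro j
    set F1 : Matrix (Fin n) (Fin 1) ℝ := Matrix.of (fun i _ => Fperp i j) with hF1def
    set e : Matrix (Fin (n - c)) (Fin 1) ℝ :=
      Matrix.of (fun k _ => if k = j then (1 : ℝ) else 0) with hedef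
    have hF1e : F1 = Fperp * e := by
      ext i k
      simp [hF1def, hedef, Matrix.mul_apply]
    have hee : eᵀ * e = 1 := by
      ext i k
      fin_cases i <;> fin_cases k
      simp [hedef, Matrix.mul_apply, Matrix.one_apply]
    have hb12 : Fᵀ * F1 = 0 := by
      rw [hF1e, ← Matrix.mul_assoc, hFFp, Matrix.zero_mul]
    have hb21 : F1ᵀ * F = 0 := by
      rw [hF1e, Matrix.transpose_mul, Matrix.mul_assoc, hFpF, Matrix.mul_zero]
    have hb22 : F1ᵀ * F1 = 1 := by
      rw [hF1e, Matrix.transpose_mul, Matrix.mul_assoc, ← Matrix.mul_assoc Fperpᵀ,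
        hFpFp, Matrix.one_mul, hee]
    have hG : (Matrix.fromCols F F1)ᵀ * Matrix.fromCols F F1 = 1 := by
      rw [transpose_fromCols, fromRows_mul_fromCols, hFF, hb12, hb21, hb22,
        fromBlocks_one]
    have hde : Matrix.diagonal dperp * e = dperp j • e := by
      ext k i
      by_cases hk : k = j
      · subst hk
        simp [hedef, Matrix.diagonal_mul]
      · simp [hedef, Matrix.diagonal_mul, hk]
    have hAHF1 : (A + H) * F1 = dperp j • F1 := by
      rw [hF1e, ← Matrix.mul_assoc, hAHFp, Matrix.mul_assoc, hde, Matrix.mul_smul]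
    have hGMG : (Matrix.fromCols F F1)ᵀ * ((A + H) * Matrix.fromCols F F1)
        = Matrix.diagonal (Sum.elim d fun _ => dperp j) := by
      rw [mul_fromCols, hAHF, hAHF1, transpose_fromCols, fromRows_mul_fromCols]
      have g11 : Fᵀ * (F * Matrix.diagonal d) = Matrix.diagonal d := by
        rw [← Matrix.mul_assoc, hFF, Matrix.one_mul]
      have g12 : Fᵀ * (dperp j • F1) = 0 := by
        rw [Matrix.mul_smul, hb12, smul_zero]
      have g21 : F1ᵀ * (F * Matrix.diagonal d) = 0 := by
        rw [← Matrix.mul_assoc, hb21, Matrix.zero_mul]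
      have g22 : F1ᵀ * (dperp j • F1) = Matrix.diagonal (fun _ : Fin 1 => dperp j) := by
        rw [Matrix.mul_smul, hb22]
        ext i k
        fin_cases i <;> fin_cases k
        simp
      rw [g11, g12, g21, g22, fromBlocks_diagonal]
    have hcard : Fintype.card (Fin n)
        < Fintype.card (Fin c ⊕ Fin 1) + Fintype.card (Fin (n - c)) := by
      simp
      omega
    refine subspace_compare (A + H) Eperp hEpEp (Matrix.fromCols F F1) hG (dperp j) β
      hcard ?_ ?_
    · intro a
      have h1 : (A + H) *ᵥ (Matrix.fromCols F F1 *ᵥ a)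
          = ((A + H) * Matrix.fromCols F F1) *ᵥ a := mulVec_mulVec _ _ _
      rw [h1, dot_mulVec_swap, mulVec_mulVec, ← Matrix.mul_assoc]
      have h2 : (Matrix.fromCols F F1)ᵀ * ((A + H) * Matrix.fromCols F F1)
          = (Matrix.fromCols F F1)ᵀ * (A + H) * Matrix.fromCols F F1 := by
        rw [Matrix.mul_assoc]
      rw [← h2, hGMG]
      refine diag_quad_ge _ _ ?_ a
      rintro (i | i)
      · exact hord i j
      · exact le_refl _
    · intro b
      have hAterm : (Eperp *ᵥ b) ⬝ᵥ (A *ᵥ (Eperp *ᵥ b)) ≤ specNorm A2 * (b ⬝ᵥ b) := by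
        have h1 : A *ᵥ (Eperp *ᵥ b) = Eperp *ᵥ (A2 *ᵥ b) := by
          rw [mulVec_mulVec, hAEp, ← mulVec_mulVec]
        rw [h1, dot_mulVec_swap, mulVec_mulVec, hEpEp, one_mulVec]
        exact quad_le_specNorm A2 b
      have hHterm : (Eperp *ᵥ b) ⬝ᵥ (H *ᵥ (Eperp *ᵥ b)) ≤ specNorm H * (b ⬝ᵥ b) := by
        have h1 := quad_le_specNorm H (Eperp *ᵥ b)
        have h2 : (Eperp *ᵥ b) ⬝ᵥ (Eperp *ᵥ b) = b ⬝ᵥ b := by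
          rw [dot_mulVec_swap, mulVec_mulVec, hEpEp, one_mulVec]
        rw [h2] at h1
        exact h1
      calc (Eperp *ᵥ b) ⬝ᵥ ((A + H) *ᵥ (Eperp *ᵥ b))
          = (Eperp *ᵥ b) ⬝ᵥ (A *ᵥ (Eperp *ᵥ b)) + (Eperp *ᵥ b) ⬝ᵥ (H *ᵥ (Eperp *ᵥ b)) := by
            rw [add_mulVec, dotProduct_add]
        _ ≤ specNorm A2 * (b ⬝ᵥ b) + specNorm H * (b ⬝ᵥ b) := add_le_add hAterm hHterm
        _ = β * (b ⬝ᵥ b) := by rw [hβdef]; ring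
  -- step 5: conclusion via the Sylvester bound
  have hA1lb : ∀ v : Fin c → ℝ, v ⬝ᵥ v = 1 → lambdaMin A1 ≤ v ⬝ᵥ (A1 *ᵥ v) :=
    fun v hv => lambdaMin_le A1 hv
  have hmain := sylvester_bound S (-(Fperpᵀ * H * E)) A1 dperp (lambdaMin A1) β
    hA1lb hweyl hsyl
  have hδpos : 0 < lambdaMin A1 - β := by
    rw [hβdef]
    linarith
  rw [hgoal_eq]
  rw [show lambdaMin A1 - specNorm A2 - specNorm H = lambdaMin A1 - β by rw [hβdef]; ring]
  rw [le_div_iff₀ hδpos]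
  calc specNorm S * (lambdaMin A1 - β) = (lambdaMin A1 - β) * specNorm S := mul_comm _ _
    _ ≤ specNorm (-(Fperpᵀ * H * E)) := hmain
    _ ≤ specNorm H := hRle
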